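/- Let N be a positive integer and define U^G(x_1, …, x_N) := Σ_{l=1}^N x_l²/2 − Σ_{1≤j<k≤N} log(x_k − x_j) on the open chamber {x ∈ ℝ^N : x_1 < x_2 < ⋯ < x_N}. Then U^G attains a unique global minimum on this chamber, and the minimizer is (z_1, …, z_N), the increasingly ordered zeros of the physicists' Hermite polynomial H_N. -/

import Mathlib

open Polynomial Finset

/-- The physicists' Hermite polynomials, satisfying
`H_{n+1}(x) = 2 x H_n(x) - H_n'(x)`, equivalently
`H_n(x) = (-1)^n e^{x^2} (d/dx)^n e^{-x^2}`. -/
noncomputable def physHermite : ℕ → Polynomial ℝ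
  | 0 => 1
  | n + 1 => 2 * X * physHermite n - derivative (physHermite n)

lemma physHermite_succ (n : ℕ) :
    physHermite (n+1) = 2 * X * physHermite n - derivative (physHermite n) := rfl

lemma C2 : (C (2:ℝ) : ℝ[X]) = 2 := map_ofNat C 2

lemma deriv_physHermite (n : ℕ) :
    derivative (physHermite (n+1)) = C ((2:ℝ)*(n+1)) * physHermite n := by
  induction n with
  | zero =>
      simp [physHermite_succ, physHermite, ← C2]
  | succ n ih =>
      rw [physHermite_succ (n+1), derivative_sub, derivative_mul, ih, derivative_mul,
        physHermite_succ n]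
      simp only [derivative_mul, derivative_C, derivative_X, derivative_ofNat, zero_mul, zero_add, mul_one]
      have hb : C ((2:ℝ)*(↑(n+1)+1)) = C ((2:ℝ)*(↑n+1)) + 2 := by
        rw [← C2, ← C_add]; push_cast; ring_nf
      rw [hb]
      ring

lemma physHermite_ode (N : ℕ) :
    derivative (derivative (physHermite N)) - 2 * X * derivative (physHermite N)
      + C ((2:ℝ)*N) * physHermite N = 0 := by
  cases N with
  | zero => simp [physHermite]
  | succ n =>
      rw [deriv_physHermite n, derivative_mul, derivative_C, physHermite_succ n]
      push_cast
      ring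

lemma physHermite_natDegree_le (n : ℕ) : (physHermite n).natDegree ≤ n := by
  induction n with
  | zero => simp [physHermite]
  | succ n ih =>
      rw [physHermite_succ]
      refine le_trans (natDegree_sub_le _ _) ?_
      refine max_le ?_ ?_
      · calc (2 * X * physHermite n).natDegree ≤ (2*X : ℝ[X]).natDegree + (physHermite n).natDegree :=
            natDegree_mul_le
          _ ≤ 1 + n := by
            gcongr
            · rw [← C2]; exact (natDegree_C_mul_le 2 X).trans (by simp)
          _ = n + 1 := by omega
      · exact le_trans (natDegree_derivative_le _) (by omega)

lemma physHermite_coeff (n : ℕ) : (physHermite n).coeff n = 2^n := by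
  induction n with
  | zero => simp [physHermite]
  | succ n ih =>
      rw [physHermite_succ, coeff_sub]
      have h1 : (2 * X * physHermite n).coeff (n+1) = 2 * (physHermite n).coeff n := by
        rw [mul_assoc, ← C2, coeff_C_mul, coeff_X_mul]
      have h2 : (derivative (physHermite n)).coeff (n+1) = 0 := by
        apply coeff_eq_zero_of_natDegree_lt
        exact lt_of_le_of_lt (natDegree_derivative_le _) (by
          have := physHermite_natDegree_le n; omega)
      rw [h1, h2, ih]
      ring


lemma polyDerivProd {ι : Type*} [DecidableEq ι] (s : Finset ι) (f : ι → ℝ[X]) :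
    derivative (∏ i ∈ s, f i) = ∑ i ∈ s, (∏ j ∈ s.erase i, f j) * derivative (f i) := by
  induction s using Finset.induction_on with
  | empty => simp
  | insert _ _ ha ih =>
      rename_i a s
      rw [Finset.prod_insert ha, derivative_mul, ih, Finset.sum_insert ha,
        Finset.erase_insert ha, Finset.mul_sum]
      rw [add_comm]
      have key : ∑ i ∈ s, f a * ((∏ j ∈ s.erase i, f j) * derivative (f i)) =
          ∑ x ∈ s, (∏ j ∈ (insert a s).erase x, f j) * derivative (f x) :=
        Finset.sum_congr rfl fun i hi => by
          rw [Finset.erase_insert_of_ne (fun h : a = i => ha (by rw [h]; exact hi)), Finset.prod_insert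
            (fun h => ha (Finset.mem_of_mem_erase h)), mul_assoc]
      rw [key, add_comm, mul_comm]

section roots
variable {N : ℕ} (z : Fin N → ℝ)

noncomputable def nodal' : ℝ[X] := ∏ l : Fin N, (X - C (z l))

lemma nodal'_monic : (nodal' z).Monic :=
  monic_prod_of_monic _ _ fun i _ => monic_X_sub_C (z i)

lemma nodal'_natDegree : (nodal' z).natDegree = N := by
  rw [nodal', natDegree_prod_of_monic _ _ (fun i _ => monic_X_sub_C (z i))]
  simp

lemma nodal'_eval_zero (j : Fin N) : (nodal' z).eval (z j) = 0 := by
  rw [nodal', eval_prod]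
  exact Finset.prod_eq_zero (Finset.mem_univ j) (by simp)

lemma nodal'_deriv : derivative (nodal' z) =
    ∑ l : Fin N, ∏ k ∈ Finset.univ.erase l, (X - C (z k)) := by
  rw [nodal', polyDerivProd]
  simp

lemma eval_prod_erase (hz : Function.Injective z) (j : Fin N) :
    (∏ k ∈ Finset.univ.erase j, (X - C (z k))).eval (z j) =
      ∏ k ∈ Finset.univ.erase j, (z j - z k) := by
  rw [eval_prod]; simp

lemma nodal'_deriv_eval (hz : Function.Injective z) (j : Fin N) :
    (derivative (nodal' z)).eval (z j) = ∏ k ∈ Finset.univ.erase j, (z j - z k) := by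
  rw [nodal'_deriv, eval_finset_sum]
  rw [Finset.sum_eq_single j]
  · exact eval_prod_erase z hz j
  · intro l _ hl
    rw [eval_prod]
    exact Finset.prod_eq_zero (Finset.mem_erase.2 ⟨(Ne.symm hl), Finset.mem_univ j⟩) (by simp)
  · simp

lemma nodal'_deriv2_eval (hz : Function.Injective z) (j : Fin N) :
    (derivative (derivative (nodal' z))).eval (z j) =
      2 * ∑ m ∈ Finset.univ.erase j, ∏ k ∈ (Finset.univ.erase j).erase m, (z j - z k) := by
  have hd2 : derivative (derivative (nodal' z)) =
      ∑ l : Fin N, ∑ m ∈ Finset.univ.erase l,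
        ∏ k ∈ (Finset.univ.erase l).erase m, (X - C (z k)) := by
    rw [nodal'_deriv, map_sum]
    refine Finset.sum_congr rfl fun l _ => ?_
    rw [polyDerivProd]
    refine Finset.sum_congr rfl fun m _ => ?_
    simp
  have hP : ∀ l m : Fin N, (∏ k ∈ (Finset.univ.erase l).erase m, (X - C (z k))).eval (z j)
      = ∏ k ∈ (Finset.univ.erase l).erase m, (z j - z k) := by
    intro l m; rw [eval_prod]; simp
  rw [hd2, eval_finset_sum]
  have hsplit : ∀ l : Fin N, (∑ m ∈ Finset.univ.erase l,
      ∏ k ∈ (Finset.univ.erase l).erase m, (X - C (z k))).eval (z j) =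
      ∑ m ∈ Finset.univ.erase l, ∏ k ∈ (Finset.univ.erase l).erase m, (z j - z k) := by
    intro l; rw [eval_finset_sum]; exact Finset.sum_congr rfl fun m _ => hP l m
  calc (∑ l : Fin N, ((∑ m ∈ Finset.univ.erase l,
          ∏ k ∈ (Finset.univ.erase l).erase m, (X - C (z k))).eval (z j)))
      = ∑ l : Fin N, ∑ m ∈ Finset.univ.erase l,
          ∏ k ∈ (Finset.univ.erase l).erase m, (z j - z k) :=
        Finset.sum_congr rfl fun l _ => hsplit l
    _ = (∑ m ∈ Finset.univ.erase j, ∏ k ∈ (Finset.univ.erase j).erase m, (z j - z k))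
        + ∑ l ∈ Finset.univ.erase j, ∑ m ∈ Finset.univ.erase l,
          ∏ k ∈ (Finset.univ.erase l).erase m, (z j - z k) := by
        rw [← Finset.add_sum_erase _ _ (Finset.mem_univ j)]
    _ = (∑ m ∈ Finset.univ.erase j, ∏ k ∈ (Finset.univ.erase j).erase m, (z j - z k))
        + ∑ l ∈ Finset.univ.erase j, ∏ k ∈ (Finset.univ.erase j).erase l, (z j - z k) := by
        congr 1
        refine Finset.sum_congr rfl fun l hl => ?_
        have hlj : l ≠ j := (Finset.mem_erase.1 hl).1
        rw [Finset.sum_eq_single j]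
        · rw [Finset.erase_right_comm]
        · intro m hm hmj
          exact Finset.prod_eq_zero (Finset.mem_erase.2 ⟨Ne.symm hmj,
            Finset.mem_erase.2 ⟨Ne.symm hlj, Finset.mem_univ j⟩⟩) (sub_self _)
        · intro h
          exact absurd (Finset.mem_erase.2 ⟨hlj.symm, Finset.mem_univ j⟩) h
    _ = 2 * ∑ m ∈ Finset.univ.erase j, ∏ k ∈ (Finset.univ.erase j).erase m, (z j - z k) := by
        ring

end roots

section main
variable {N : ℕ} {z : Fin N → ℝ}

theorem hermite_eval_zero_of_crit (hN : 0 < N) (hz : Function.Injective z)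
    (hcrit : ∀ l, z l = ∑ k ∈ Finset.univ.erase l, (z l - z k)⁻¹) (j : Fin N) :
    (physHermite N).eval (z j) = 0 := by
  set P := nodal' z with hP
  -- second derivative identity at roots
  have hroot2 : ∀ i, (derivative (derivative P)).eval (z i)
      = 2 * z i * (derivative P).eval (z i) := by
    intro i
    rw [nodal'_deriv2_eval z hz i, nodal'_deriv_eval z hz i]
    have key : ∑ m ∈ Finset.univ.erase i, ∏ k ∈ (Finset.univ.erase i).erase m, (z i - z k)
        = (∑ m ∈ Finset.univ.erase i, (z i - z m)⁻¹) * ∏ k ∈ Finset.univ.erase i, (z i - z k) := by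
      rw [Finset.sum_mul]
      refine Finset.sum_congr rfl fun m hm => ?_
      have hne : z i - z m ≠ 0 := sub_ne_zero.2 fun h => (Finset.mem_erase.1 hm).1 (hz h).symm
      rw [← Finset.mul_prod_erase _ _ hm, ← mul_assoc, inv_mul_cancel₀ hne, one_mul]
    rw [key, ← hcrit i]
    ring
  -- the ODE combination R vanishes
  set R := derivative (derivative P) - 2 * X * derivative P + C ((2:ℝ)*N) * P with hRdef
  have hReval : ∀ i, R.eval (z i) = 0 := by
    intro i
    simp only [hRdef, eval_add, eval_sub, eval_mul, eval_ofNat, eval_X, eval_C,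
      nodal'_eval_zero, hroot2 i]
    rw [nodal'_eval_zero]
    ring
  have hPdeg : P.natDegree = N := nodal'_natDegree z
  have hPmonic : P.Monic := nodal'_monic z
  have hRcoeffN : R.coeff N = 0 := by
    have h1 : (derivative (derivative P)).coeff N = 0 := by
      apply coeff_eq_zero_of_natDegree_lt
      calc (derivative (derivative P)).natDegree ≤ (derivative P).natDegree - 1 :=
            natDegree_derivative_le _
        _ ≤ P.natDegree - 1 - 1 := by have := natDegree_derivative_le P; omega
        _ < N := by omega
    have h2 : (2 * X * derivative P).coeff N = 2 * (N : ℝ) := by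
      rw [mul_assoc, ← C2, coeff_C_mul]
      obtain ⟨M, rfl⟩ : ∃ M, N = M + 1 := ⟨N - 1, by omega⟩
      rw [coeff_X_mul, coeff_derivative]
      have : P.coeff (M + 1) = 1 := by
        have := hPmonic.leadingCoeff
        rwa [leadingCoeff, hPdeg] at this
      rw [this]; push_cast; ring
    have h3 : (C ((2:ℝ)*N) * P).coeff N = 2 * (N:ℝ) := by
      rw [coeff_C_mul]
      have : P.coeff N = 1 := by
        have := hPmonic.leadingCoeff
        rwa [leadingCoeff, hPdeg] at this
      rw [this, mul_one]
    rw [hRdef, coeff_add, coeff_sub, h1, h2, h3]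
    ring
  have hRdeg : R.natDegree ≤ N := by
    rw [hRdef]
    refine le_trans (natDegree_add_le _ _) (max_le (le_trans (natDegree_sub_le _ _) (max_le ?_ ?_)) ?_)
    · calc (derivative (derivative P)).natDegree ≤ P.natDegree := by
            have := natDegree_derivative_le P
            have := natDegree_derivative_le (derivative P)
            omega
        _ = N := hPdeg
    · calc (2*X*derivative P).natDegree ≤ (2*X:ℝ[X]).natDegree + (derivative P).natDegree :=
            natDegree_mul_le
        _ ≤ 1 + (P.natDegree - 1) := by
            gcongr
            · rw [← C2]; exact (natDegree_C_mul_le 2 X).trans (by simp)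
            · exact natDegree_derivative_le P
        _ ≤ N := by omega
    · exact le_trans (natDegree_C_mul_le _ _) (le_of_eq hPdeg)
  have hR0 : R = 0 := by
    by_contra hR0
    have hne : R.natDegree ≠ N := by
      intro h
      exact (leadingCoeff_ne_zero.2 hR0) (by rw [leadingCoeff, h]; exact hRcoeffN)
    refine hR0 (eq_zero_of_natDegree_lt_card_of_eval_eq_zero R hz hReval ?_)
    rw [Fintype.card_fin]; omega
  -- G := H_N - 2^N P satisfies the same ODE
  set G := physHermite N - C ((2:ℝ)^N) * P with hGdef
  have hGode : derivative (derivative G) - 2 * X * derivative G + C ((2:ℝ)*N) * G = 0 := by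
    have h1 := physHermite_ode N
    simp only [hGdef, derivative_sub, derivative_C_mul]
    linear_combination h1 - C ((2:ℝ)^N) * hR0
  have hGcoeffN : G.coeff N = 0 := by
    rw [hGdef, coeff_sub, coeff_C_mul, physHermite_coeff]
    have : P.coeff N = 1 := by
      have := hPmonic.leadingCoeff; rwa [leadingCoeff, hPdeg] at this
    rw [this]; ring
  have hGdeg : G.natDegree ≤ N := by
    refine le_trans (natDegree_sub_le _ _) (max_le (physHermite_natDegree_le N) ?_)
    exact le_trans (natDegree_C_mul_le _ _) (le_of_eq hPdeg)
  have hG0 : G = 0 := by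
    by_contra hG0
    set m := G.natDegree with hm
    have hmN : m < N := by
      rcases lt_or_eq_of_le hGdeg with h | h
      · exact h
      · exact absurd (by rw [leadingCoeff, ← hm, h]; exact hGcoeffN)
          (leadingCoeff_ne_zero.2 hG0)
    have hcoeff := congrArg (fun p => Polynomial.coeff p m) hGode
    simp only [coeff_add, coeff_sub, coeff_zero, coeff_C_mul] at hcoeff
    have h1 : (derivative (derivative G)).coeff m = 0 := by
      rw [coeff_derivative, coeff_derivative,
        coeff_eq_zero_of_natDegree_lt (by omega : G.natDegree < m + 1 + 1)]
      ring
    have h2 : (2 * X * derivative G).coeff m = 2 * (m:ℝ) * G.coeff m := by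
      cases m with
      | zero =>
          rw [mul_assoc, ← C2, coeff_C_mul, mul_coeff_zero, coeff_X_zero]
          push_cast; ring
      | succ m' =>
          rw [mul_assoc, ← C2, coeff_C_mul, coeff_X_mul, coeff_derivative]
          push_cast; ring
    rw [h1, h2] at hcoeff
    have hGm : G.coeff m = 0 := by
      have hfac : ((2:ℝ)*N - 2*m) * G.coeff m = 0 := by linarith
      rcases mul_eq_zero.1 hfac with h | h
      · exfalso
        have : (m:ℝ) < (N:ℝ) := by exact_mod_cast hmN
        nlinarith
      · exact h
    exact (leadingCoeff_ne_zero.2 hG0) (by rw [leadingCoeff, ← hm]; exact hGm)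
  have : physHermite N = C ((2:ℝ)^N) * P := by
    have := sub_eq_zero.1 hG0; exact this
  rw [this, eval_mul, nodal'_eval_zero, mul_zero]

end main

/-- The Gaussian log-gas energy
`U^G(x) = ∑_l x_l²/2 - ∑_{j<k} log(x_k - x_j)`. -/
noncomputable def UG (N : ℕ) (x : Fin N → ℝ) : ℝ :=
  (∑ l, x l ^ 2 / 2) -
    ∑ p ∈ Finset.univ.filter (fun p : Fin N × Fin N => p.1 < p.2),
      Real.log (x p.2 - x p.1)


variable {N : ℕ}


lemma convex_chamber : Convex ℝ {x : Fin N → ℝ | StrictMono x} := by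
  intro x hx y hy a b ha hb hab
  intro i j hij
  have h1 := hx hij
  have h2 := hy hij
  simp only [Pi.add_apply, Pi.smul_apply, smul_eq_mul]
  rcases ha.lt_or_eq with ha' | ha'
  · nlinarith
  · have hb' : b = 1 := by linarith
    rw [← ha', hb']; simpa using h2

lemma strictConvexOn_UG : StrictConvexOn ℝ {x : Fin N → ℝ | StrictMono x} (UG N) := by
  refine ⟨convex_chamber, ?_⟩
  intro x hx y hy hxy a b ha hb hab
  simp only [smul_eq_mul]
  have hQ : (∑ l, (a • x + b • y) l ^ 2 / 2) < a * ∑ l, x l ^ 2 / 2 + b * ∑ l, y l ^ 2 / 2 := by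
    rw [Finset.mul_sum, Finset.mul_sum, ← Finset.sum_add_distrib]
    obtain ⟨l0, hl0⟩ := Function.ne_iff.1 hxy
    refine Finset.sum_lt_sum (fun l _ => ?_) ⟨l0, Finset.mem_univ l0, ?_⟩
    · simp only [Pi.add_apply, Pi.smul_apply, smul_eq_mul]
      nlinarith [sq_nonneg (x l - y l), mul_pos ha hb]
    · simp only [Pi.add_apply, Pi.smul_apply, smul_eq_mul]
      nlinarith [sq_abs (x l0 - y l0), mul_pos ha hb, sq_pos_of_ne_zero (sub_ne_zero.2 hl0)]
  have hL : ∀ p ∈ Finset.univ.filter (fun p : Fin N × Fin N => p.1 < p.2),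
      a * Real.log (x p.2 - x p.1) + b * Real.log (y p.2 - y p.1) ≤
        Real.log ((a • x + b • y) p.2 - (a • x + b • y) p.1) := by
    intro p hp
    have hplt : p.1 < p.2 := (Finset.mem_filter.1 hp).2
    have hgx : (0:ℝ) < x p.2 - x p.1 := sub_pos.2 (hx hplt)
    have hgy : (0:ℝ) < y p.2 - y p.1 := sub_pos.2 (hy hplt)
    have key := strictConcaveOn_log_Ioi.concaveOn.2 (Set.mem_Ioi.2 hgx) (Set.mem_Ioi.2 hgy)
      ha.le hb.le hab
    simp only [smul_eq_mul] at key
    have heq : (a • x + b • y) p.2 - (a • x + b • y) p.1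
        = a * (x p.2 - x p.1) + b * (y p.2 - y p.1) := by
      simp only [Pi.add_apply, Pi.smul_apply, smul_eq_mul]; ring
    rw [heq]
    exact key
  have hLsum : a * (∑ p ∈ Finset.univ.filter (fun p : Fin N × Fin N => p.1 < p.2),
        Real.log (x p.2 - x p.1)) + b * (∑ p ∈ Finset.univ.filter (fun p : Fin N × Fin N => p.1 < p.2),
        Real.log (y p.2 - y p.1)) ≤
      ∑ p ∈ Finset.univ.filter (fun p : Fin N × Fin N => p.1 < p.2),
        Real.log ((a • x + b • y) p.2 - (a • x + b • y) p.1) := by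
    rw [Finset.mul_sum, Finset.mul_sum, ← Finset.sum_add_distrib]
    exact Finset.sum_le_sum hL
  unfold UG
  linarith

section bounds
variable (N)

/-- abbreviations -/
noncomputable def pairsN : Finset (Fin N × Fin N) :=
  Finset.univ.filter (fun p : Fin N × Fin N => p.1 < p.2)

lemma UG_eq (x : Fin N → ℝ) :
    UG N x = (∑ l, x l ^ 2 / 2) - ∑ p ∈ pairsN N, Real.log (x p.2 - x p.1) := rfl

variable {N}

lemma card_pairsN_le : ((pairsN N).card : ℝ) ≤ (N:ℝ)^2 := by
  have h : (pairsN N).card ≤ N * N := by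
    calc (pairsN N).card ≤ (Finset.univ : Finset (Fin N × Fin N)).card := Finset.card_filter_le _ _
      _ = N * N := by simp
  calc ((pairsN N).card : ℝ) ≤ (N*N : ℕ) := by exact_mod_cast h
    _ = (N:ℝ)^2 := by push_cast; ring

lemma abs_le_T (x : Fin N → ℝ) (l : Fin N) : |x l| ≤ ∑ m, |x m| :=
  Finset.single_le_sum (fun m _ => abs_nonneg (x m)) (Finset.mem_univ l)

lemma T_le_Q (x : Fin N → ℝ) : (∑ m, |x m|) ≤ (∑ m, x m ^ 2 / 2) + N / 2 := by
  have : (∑ m, |x m|) ≤ ∑ m, (x m ^ 2 / 2 + 1/2) := by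
    refine Finset.sum_le_sum fun m _ => ?_
    nlinarith [sq_nonneg (|x m| - 1), sq_abs (x m)]
  calc (∑ m, |x m|) ≤ ∑ m, (x m ^ 2 / 2 + 1/2) := this
    _ = (∑ m, x m ^ 2 / 2) + N / 2 := by
        rw [Finset.sum_add_distrib]
        congr 1
        simp [Finset.sum_const]
        ring

lemma gap_le_T (x : Fin N → ℝ) {j k : Fin N} (hjk : j ≠ k) :
    x k - x j ≤ ∑ m, |x m| := by
  have h1 : x k - x j ≤ |x k| + |x j| := by
    have := abs_nonneg (x j); have := le_abs_self (x k); have := neg_abs_le (x j); linarith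
  have h2 : |x k| + |x j| ≤ ∑ m, |x m| := by
    have : ({k, j} : Finset (Fin N)) ⊆ Finset.univ := Finset.subset_univ _
    calc |x k| + |x j| = ∑ m ∈ ({k, j} : Finset (Fin N)), |x m| := by
          rw [Finset.sum_pair hjk.symm]
      _ ≤ ∑ m, |x m| := Finset.sum_le_sum_of_subset_of_nonneg this
          (fun m _ _ => abs_nonneg (x m))
  linarith

lemma log_le_lam (lam t : ℝ) (hlam : 1 ≤ lam) (ht : 0 < t) :
    Real.log t ≤ t / lam + lam := by
  have hlam0 : (0:ℝ) < lam := by linarith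
  have h1 : Real.log (t / lam) ≤ t / lam - 1 :=
    Real.log_le_sub_one_of_pos (div_pos ht hlam0)
  have h2 : Real.log lam ≤ lam - 1 := Real.log_le_sub_one_of_pos hlam0
  have h3 : Real.log t = Real.log (t / lam) + Real.log lam := by
    rw [← Real.log_mul (by positivity) (by positivity)]
    congr 1
    field_simp
  linarith

noncomputable def lamN (N : ℕ) : ℝ := 4 * ((N:ℝ)^2 + 1)

lemma one_le_lamN : 1 ≤ lamN N := by unfold lamN; nlinarith [sq_nonneg ((N:ℝ))]
 
/-- key sum bound: sum of logs over any subset of pairs -/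
lemma sum_log_le (x : Fin N → ℝ) (hx : StrictMono x) (s : Finset (Fin N × Fin N))
    (hs : s ⊆ pairsN N) :
    ∑ p ∈ s, Real.log (x p.2 - x p.1) ≤ (∑ m, x m ^ 2 / 2) / 4 + (N:ℝ) + lamN N * (N:ℝ)^2 := by
  set T := ∑ m, |x m| with hT
  set Q := ∑ m, x m ^ 2 / 2 with hQ
  have hT0 : 0 ≤ T := Finset.sum_nonneg fun m _ => abs_nonneg _
  have hQ0 : 0 ≤ Q := Finset.sum_nonneg fun m _ => by positivity
  have hlam : (1:ℝ) ≤ lamN N := one_le_lamN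
  have hlam0 : (0:ℝ) < lamN N := by linarith
  have hterm : ∀ p ∈ s, Real.log (x p.2 - x p.1) ≤ T / lamN N + lamN N := by
    intro p hp
    have hplt : p.1 < p.2 := (Finset.mem_filter.1 (hs hp)).2
    have hgap : 0 < x p.2 - x p.1 := sub_pos.2 (hx hplt)
    calc Real.log (x p.2 - x p.1) ≤ (x p.2 - x p.1) / lamN N + lamN N :=
          log_le_lam _ _ hlam hgap
      _ ≤ T / lamN N + lamN N := by
          have := gap_le_T x (ne_of_lt hplt)
          gcongr
  have hbnd0 : 0 ≤ T / lamN N + lamN N := by positivity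
  have hcard : (s.card : ℝ) ≤ (N:ℝ)^2 := by
    refine le_trans ?_ card_pairsN_le
    exact_mod_cast Finset.card_le_card hs
  have h1 : ∑ p ∈ s, Real.log (x p.2 - x p.1) ≤ (N:ℝ)^2 * (T / lamN N + lamN N) := by
    calc ∑ p ∈ s, Real.log (x p.2 - x p.1) ≤ ∑ p ∈ s, (T / lamN N + lamN N) :=
          Finset.sum_le_sum hterm
      _ = (s.card : ℝ) * (T / lamN N + lamN N) := by rw [Finset.sum_const, nsmul_eq_mul]
      _ ≤ (N:ℝ)^2 * (T / lamN N + lamN N) := by gcongr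
  have h2 : (N:ℝ)^2 * (T / lamN N) ≤ T / 4 := by
    have hq : (N:ℝ)^2 / lamN N ≤ 1/4 := by
      rw [div_le_iff₀ hlam0]; unfold lamN; nlinarith
    calc (N:ℝ)^2 * (T / lamN N) = T * ((N:ℝ)^2 / lamN N) := by ring
      _ ≤ T * (1/4) := mul_le_mul_of_nonneg_left hq hT0
      _ = T / 4 := by ring
  have h3 : T ≤ Q + N / 2 := T_le_Q x
  have hN0 : (0:ℝ) ≤ (N:ℝ) := Nat.cast_nonneg N
  calc ∑ p ∈ s, Real.log (x p.2 - x p.1) ≤ (N:ℝ)^2 * (T / lamN N + lamN N) := h1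
    _ = (N:ℝ)^2 * (T / lamN N) + lamN N * (N:ℝ)^2 := by ring
    _ ≤ T / 4 + lamN N * (N:ℝ)^2 := by linarith
    _ ≤ (Q + N/2) / 4 + lamN N * (N:ℝ)^2 := by linarith
    _ ≤ Q / 4 + (N:ℝ) + lamN N * (N:ℝ)^2 := by linarith

end bounds

noncomputable def CN (N : ℕ) (c : ℝ) : ℝ := c + (N:ℝ) + lamN N * (N:ℝ)^2
noncomputable def QN (N : ℕ) (c : ℝ) : ℝ := (4/3) * CN N c
noncomputable def BN (N : ℕ) (c : ℝ) : ℝ := Real.sqrt (2 * QN N c)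
noncomputable def deltaN (N : ℕ) (c : ℝ) : ℝ := Real.exp (-(CN N c))

lemma UG_sublevel_bounds {c : ℝ} {x : Fin N → ℝ} (hx : StrictMono x) (hxc : UG N x ≤ c) :
    (∀ l, |x l| ≤ BN N c) ∧ ∀ j k : Fin N, j < k → deltaN N c ≤ x k - x j := by
  set Q := ∑ m, x m ^ 2 / 2 with hQdef
  have hQ0 : 0 ≤ Q := Finset.sum_nonneg fun m _ => by positivity
  have hsum := sum_log_le x hx (pairsN N) (Finset.Subset.refl _)
  have hUG : UG N x = Q - ∑ p ∈ pairsN N, Real.log (x p.2 - x p.1) := UG_eq N x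
  have hQle : Q ≤ QN N c := by
    unfold QN CN
    have : Q - (Q / 4 + (N:ℝ) + lamN N * (N:ℝ)^2) ≤ c := by
      rw [hUG] at hxc; linarith
    linarith
  constructor
  · intro l
    have h1 : x l ^ 2 / 2 ≤ Q :=
      Finset.single_le_sum (f := fun m => x m ^ 2 / 2) (fun m _ => by positivity)
        (Finset.mem_univ l)
    have h2 : x l ^ 2 ≤ 2 * QN N c := by linarith
    calc |x l| = Real.sqrt (x l ^ 2) := (Real.sqrt_sq_eq_abs _).symm
      _ ≤ BN N c := Real.sqrt_le_sqrt h2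
  · intro j k hjk
    have hp0 : (⟨j, k⟩ : Fin N × Fin N) ∈ pairsN N := by
      unfold pairsN; simp [hjk]
    have hgap : 0 < x k - x j := sub_pos.2 (hx hjk)
    have hsplit : ∑ p ∈ pairsN N, Real.log (x p.2 - x p.1)
        = Real.log (x k - x j) + ∑ p ∈ (pairsN N).erase ⟨j, k⟩, Real.log (x p.2 - x p.1) := by
      rw [← Finset.add_sum_erase _ _ hp0]
    have hrest := sum_log_le x hx ((pairsN N).erase ⟨j, k⟩) (Finset.erase_subset _ _)
    have hlog : -(CN N c) ≤ Real.log (x k - x j) := by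
      rw [hUG, hsplit] at hxc
      unfold CN
      linarith
    calc deltaN N c = Real.exp (-(CN N c)) := rfl
      _ ≤ Real.exp (Real.log (x k - x j)) := Real.exp_le_exp.2 hlog
      _ = x k - x j := Real.exp_log hgap

theorem UG_exists_min (hN : 0 < N) :
    ∃ z : Fin N → ℝ, StrictMono z ∧ ∀ x : Fin N → ℝ, StrictMono x → UG N z ≤ UG N x := by
  classical
  set x0 : Fin N → ℝ := fun i => (i : ℕ) with hx0def
  have hx0 : StrictMono x0 := by
    intro i j hij
    have h : (i:ℕ) < (j:ℕ) := hij
    show ((i:ℕ):ℝ) < ((j:ℕ):ℝ)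
    exact_mod_cast h
  set c := UG N x0 with hcdef
  set B := BN N c + (N:ℝ) with hBdef
  set δ := min (deltaN N c) 1 with hδdef
  have hδpos : 0 < δ := lt_min (Real.exp_pos _) one_pos
  set K : Set (Fin N → ℝ) :=
    {x | (∀ l, |x l| ≤ B) ∧ ∀ p : Fin N × Fin N, p.1 < p.2 → δ ≤ x p.2 - x p.1} with hKdef
  have hBN0 : 0 ≤ BN N c := Real.sqrt_nonneg _
  have hx0K : x0 ∈ K := by
    constructor
    · intro l
      have h1 : (l:ℕ) < N := l.isLt
      have : |x0 l| = (l:ℕ) := abs_of_nonneg (Nat.cast_nonneg _)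
      rw [this, hBdef]
      have : ((l:ℕ):ℝ) ≤ (N:ℝ) := by exact_mod_cast le_of_lt h1
      linarith
    · intro p hp
      have h1 : (p.1:ℕ) + 1 ≤ (p.2:ℕ) := hp
      have h2 : (1:ℝ) ≤ x0 p.2 - x0 p.1 := by
        have : ((p.1:ℕ):ℝ) + 1 ≤ ((p.2:ℕ):ℝ) := by exact_mod_cast h1
        simp only [hx0def]; linarith
      calc δ ≤ 1 := min_le_right _ _
        _ ≤ x0 p.2 - x0 p.1 := h2
  have hKmono : ∀ x ∈ K, StrictMono x := by
    intro x hx i j hij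
    have := hx.2 ⟨i, j⟩ hij
    simp only at this
    linarith
  have hKclosed : IsClosed K := by
    have : K = (⋂ l, {x : Fin N → ℝ | |x l| ≤ B}) ∩
        ⋂ p : Fin N × Fin N, {x | p.1 < p.2 → δ ≤ x p.2 - x p.1} := by
      ext x
      simp only [hKdef, Set.mem_setOf_eq, Set.mem_inter_iff, Set.mem_iInter]
    rw [this]
    refine IsClosed.inter (isClosed_iInter fun l => ?_) (isClosed_iInter fun p => ?_)
    · exact isClosed_le ((continuous_apply l).abs) continuous_const
    · by_cases hp : p.1 < p.2
      · simp only [hp, true_implies]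
        exact isClosed_le continuous_const ((continuous_apply p.2).sub (continuous_apply p.1))
      · simp only [hp, false_implies, Set.setOf_true]
        exact isClosed_univ
  have hKcompact : IsCompact K := by
    refine IsCompact.of_isClosed_subset (isCompact_Icc
      (a := fun _ : Fin N => -B) (b := fun _ : Fin N => B)) hKclosed ?_
    intro x hx
    rw [Set.mem_Icc]
    constructor <;> intro l
    · exact (abs_le.1 (hx.1 l)).1
    · exact (abs_le.1 (hx.1 l)).2
  have hcont : ContinuousOn (UG N) K := by
    have h1 : Continuous (fun x : Fin N → ℝ => ∑ l, x l ^ 2 / 2) :=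
      continuous_finset_sum _ fun l _ => ((continuous_apply l).pow 2).div_const 2
    refine ContinuousOn.sub h1.continuousOn ?_
    refine continuousOn_finset_sum _ fun p hp => ?_
    have hplt : p.1 < p.2 := (Finset.mem_filter.1 hp).2
    refine ContinuousOn.log (((continuous_apply p.2).sub (continuous_apply p.1)).continuousOn) ?_
    intro x hx
    have := hx.2 p hplt
    intro h0
    rw [h0] at this
    linarith
  obtain ⟨z, hzK, hzmin⟩ := hKcompact.exists_isMinOn ⟨x0, hx0K⟩ hcont
  refine ⟨z, hKmono z hzK, ?_⟩
  intro x hxmono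
  by_cases hc : UG N x ≤ c
  · have hb := UG_sublevel_bounds hxmono hc
    have hxK : x ∈ K := by
      constructor
      · intro l
        calc |x l| ≤ BN N c := hb.1 l
          _ ≤ B := by rw [hBdef]; have : (0:ℝ) ≤ (N:ℝ) := Nat.cast_nonneg N; linarith
      · intro p hp
        calc δ ≤ deltaN N c := min_le_left _ _
          _ ≤ x p.2 - x p.1 := hb.2 p.1 p.2 hp
    exact hzmin hxK
  · have h1 : UG N z ≤ c := hzmin hx0K
    linarith

theorem crit_of_min (z : Fin N → ℝ) (hz : StrictMono z)
    (hmin : ∀ x : Fin N → ℝ, StrictMono x → UG N z ≤ UG N x) (l : Fin N) :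
    z l = ∑ k ∈ Finset.univ.erase l, (z l - z k)⁻¹ := by
  classical
  have hSopen : IsOpen {x : Fin N → ℝ | StrictMono x} := by
    have heq : {x : Fin N → ℝ | StrictMono x} =
        ⋂ p : Fin N × Fin N, {x | p.1 < p.2 → x p.1 < x p.2} := by
      ext x
      simp only [Set.mem_setOf_eq, Set.mem_iInter]
      constructor
      · intro h p hp; exact h hp
      · intro h i j hij; exact h ⟨i, j⟩ hij
    rw [heq]
    refine isOpen_iInter_of_finite fun p => ?_
    by_cases hp : p.1 < p.2
    · simp only [hp, true_implies]
      exact isOpen_lt (continuous_apply p.1) (continuous_apply p.2)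
    · simp only [hp, false_implies, Set.setOf_true]
      exact isOpen_univ
  set g : ℝ → ℝ := fun t => UG N (Function.update z l t) with hgdef
  have hulcont : Continuous (fun t : ℝ => Function.update z l t) :=
    continuous_const.update l continuous_id
  have hlocmin : IsLocalMin g (z l) := by
    have hmem : Function.update z l (z l) ∈ {x : Fin N → ℝ | StrictMono x} := by
      rw [Function.update_eq_self]; exact hz
    have hnhds : (fun t : ℝ => Function.update z l t) ⁻¹' {x | StrictMono x} ∈ nhds (z l) :=
      hulcont.continuousAt.preimage_mem_nhds (hSopen.mem_nhds hmem)
    filter_upwards [hnhds] with t ht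
    have h1 : g (z l) = UG N z := by rw [hgdef]; simp [Function.update_eq_self]
    rw [h1]
    exact hmin _ ht
  -- derivative coefficients
  set dcoef : Fin N × Fin N → ℝ := fun p =>
    if p.1 = l then -(z p.2 - z l)⁻¹ else if p.2 = l then (z l - z p.1)⁻¹ else 0 with hdcoef
  -- derivative of the quadratic part
  have hpart1 : HasDerivAt (fun t : ℝ => ∑ m, (Function.update z l t) m ^ 2 / 2) (z l) (z l) := by
    have heq : (fun t : ℝ => ∑ m, (Function.update z l t) m ^ 2 / 2)
        = fun t => t ^ 2 / 2 + ∑ m ∈ Finset.univ.erase l, z m ^ 2 / 2 := by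
      funext t
      rw [← Finset.add_sum_erase _ _ (Finset.mem_univ l), Function.update_self]
      congr 1
      exact Finset.sum_congr rfl fun m hm => by
        rw [Function.update_of_ne (Finset.mem_erase.1 hm).1]
    rw [heq]
    have h := ((hasDerivAt_pow 2 (z l)).div_const 2).add_const
      (∑ m ∈ Finset.univ.erase l, z m ^ 2 / 2)
    refine h.congr_deriv ?_
    norm_num
  -- derivative of each log term
  have hpart2 : ∀ p ∈ pairsN N, HasDerivAt
      (fun t : ℝ => Real.log ((Function.update z l t) p.2 - (Function.update z l t) p.1))
      (dcoef p) (z l) := by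
    intro p hp
    have hplt : p.1 < p.2 := (Finset.mem_filter.1 hp).2
    by_cases h1 : p.1 = l
    · have h2 : p.2 ≠ l := by intro h; rw [h1, h] at hplt; exact lt_irrefl l hplt
      have heq : (fun t : ℝ => Real.log ((Function.update z l t) p.2 - (Function.update z l t) p.1))
          = fun t => Real.log (z p.2 - t) := by
        funext t
        rw [Function.update_of_ne h2, h1, Function.update_self]
      rw [heq, hdcoef]
      simp only [h1, if_pos]
      have hne : z p.2 - z l ≠ 0 := sub_ne_zero.2 (ne_of_gt (hz (h1 ▸ hplt)))
      have hinner : HasDerivAt (fun t : ℝ => z p.2 - t) (-1) (z l) := by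
        simpa using (hasDerivAt_id (z l)).const_sub (z p.2)
      have := hinner.log hne
      rw [show -(z p.2 - z l)⁻¹ = -1 / (z p.2 - z l) by rw [neg_div, one_div]]
      exact this
    · by_cases h2 : p.2 = l
      · have heq : (fun t : ℝ => Real.log ((Function.update z l t) p.2 - (Function.update z l t) p.1))
            = fun t => Real.log (t - z p.1) := by
          funext t
          rw [Function.update_of_ne h1, h2, Function.update_self]
        rw [heq, hdcoef]
        simp only [h1, if_neg, h2, if_pos]
        have hne : z l - z p.1 ≠ 0 := sub_ne_zero.2 (ne_of_gt (hz (h2 ▸ hplt)))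
        have hinner : HasDerivAt (fun t : ℝ => t - z p.1) 1 (z l) := by
          simpa using (hasDerivAt_id (z l)).sub_const (z p.1)
        have := hinner.log hne
        rw [show (z l - z p.1)⁻¹ = 1 / (z l - z p.1) from (one_div _).symm]
        exact this
      · have heq : (fun t : ℝ => Real.log ((Function.update z l t) p.2 - (Function.update z l t) p.1))
            = fun _ => Real.log (z p.2 - z p.1) := by
          funext t
          rw [Function.update_of_ne h1, Function.update_of_ne h2]
        rw [heq, hdcoef]
        simp only [h1, h2, if_neg, if_false]
        exact hasDerivAt_const _ _
  have hderiv : HasDerivAt g (z l - ∑ p ∈ pairsN N, dcoef p) (z l) := by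
    have h2 : HasDerivAt (fun t : ℝ => ∑ p ∈ pairsN N,
        Real.log ((Function.update z l t) p.2 - (Function.update z l t) p.1))
        (∑ p ∈ pairsN N, dcoef p) (z l) := HasDerivAt.fun_sum hpart2
    exact hpart1.sub h2
  have hD0 : z l - ∑ p ∈ pairsN N, dcoef p = 0 := hlocmin.hasDerivAt_eq_zero hderiv
  -- reindex the sum
  have hreindex : ∑ p ∈ pairsN N, dcoef p = ∑ k ∈ Finset.univ.erase l, (z l - z k)⁻¹ := by
    rw [← Finset.sum_filter_of_ne (p := fun p : Fin N × Fin N => p.1 = l ∨ p.2 = l)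
      (fun p _ hne => by
        by_contra hcon
        exact hne (by
          rw [hdcoef]
          simp only
          rw [if_neg (fun h => hcon (Or.inl h)), if_neg (fun h => hcon (Or.inr h))]))]
    refine Finset.sum_nbij' (i := fun p : Fin N × Fin N => if p.1 = l then p.2 else p.1)
      (j := fun k : Fin N => if l < k then (l, k) else (k, l)) ?_ ?_ ?_ ?_ ?_
    · intro p hp
      obtain ⟨hpair, hor⟩ := Finset.mem_filter.1 hp
      have hplt : p.1 < p.2 := (Finset.mem_filter.1 hpair).2
      by_cases h1 : p.1 = l
      · simp only [h1, if_pos]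
        refine Finset.mem_erase.2 ⟨?_, Finset.mem_univ _⟩
        intro h; rw [h1, h] at hplt; exact lt_irrefl l hplt
      · simp only [h1, if_neg, if_false]
        exact Finset.mem_erase.2 ⟨h1, Finset.mem_univ _⟩
    · intro k hk
      have hkl : k ≠ l := (Finset.mem_erase.1 hk).1
      by_cases hlk : l < k
      · simp only [hlk, if_pos]
        refine Finset.mem_filter.2 ⟨Finset.mem_filter.2 ⟨Finset.mem_univ _, hlk⟩, Or.inl rfl⟩
      · have : k < l := lt_of_le_of_ne (not_lt.1 hlk) hkl
        simp only [hlk, if_neg, if_false]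
        exact Finset.mem_filter.2 ⟨Finset.mem_filter.2 ⟨Finset.mem_univ _, this⟩, Or.inr rfl⟩
    · intro p hp
      obtain ⟨hpair, hor⟩ := Finset.mem_filter.1 hp
      have hplt : p.1 < p.2 := (Finset.mem_filter.1 hpair).2
      by_cases h1 : p.1 = l
      · simp only [h1, if_pos]
        rw [if_pos (by rw [← h1]; exact hplt : l < p.2)]
        exact Prod.ext h1.symm rfl
      · have h2 : p.2 = l := hor.resolve_left h1
        simp only [h1, if_neg, if_false]
        rw [if_neg (by rw [← h2]; exact not_lt.2 (le_of_lt hplt))]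
        exact Prod.ext rfl h2.symm
    · intro k hk
      have hkl : k ≠ l := (Finset.mem_erase.1 hk).1
      by_cases hlk : l < k
      · simp [hlk]
      · simp [hlk, hkl]
    · intro p hp
      obtain ⟨hpair, hor⟩ := Finset.mem_filter.1 hp
      have hplt : p.1 < p.2 := (Finset.mem_filter.1 hpair).2
      by_cases h1 : p.1 = l
      · simp only [hdcoef, h1, if_pos]
        rw [show z l - z p.2 = -(z p.2 - z l) from by ring, inv_neg]
      · have h2 : p.2 = l := hor.resolve_left h1
        simp only [hdcoef, h1, if_neg, if_false, h2, if_pos]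
  rw [hreindex] at hD0
  linarith

/-- Stieltjes' theorem (Gaussian case): on the chamber `x_1 < x_2 < ⋯ < x_N`, the energy
`U^G` has a unique global minimiser, given by the increasingly ordered zeros of the
physicists' Hermite polynomial `H_N`. -/
theorem stmt_4 (N : ℕ) (hN : 0 < N) :
    ∃ z : Fin N → ℝ, StrictMono z ∧ (∀ j, (physHermite N).eval (z j) = 0) ∧
      (∀ x : Fin N → ℝ, StrictMono x → UG N z ≤ UG N x) ∧
      (∀ x : Fin N → ℝ, StrictMono x → UG N x = UG N z → x = z) := by
  obtain ⟨z, hz, hzmin⟩ := UG_exists_min (N := N) hN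
  have hcrit : ∀ l, z l = ∑ k ∈ Finset.univ.erase l, (z l - z k)⁻¹ :=
    crit_of_min z hz hzmin
  refine ⟨z, hz, fun j => hermite_eval_zero_of_crit hN hz.injective hcrit j, hzmin, ?_⟩
  intro x hx hUGeq
  have hminz : IsMinOn (UG N) {x : Fin N → ℝ | StrictMono x} z :=
    isMinOn_iff.2 fun y hy => hzmin y hy
  have hminx : IsMinOn (UG N) {x : Fin N → ℝ | StrictMono x} x :=
    isMinOn_iff.2 fun y hy => by rw [hUGeq]; exact hzmin y hy
  exact strictConvexOn_UG.eq_of_isMinOn hminx hminz hx hz
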